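/- Let β > 0 and consider the quadratic form on H¹((−a,0) ∪ (0,a)) (Neumann at ±a) given by q(f) = ∫_{−a}^{a}|f'|² − β⁻¹|f(0⁺) − f(0⁻)|². Then q is bounded below by t₋‖f‖², where t₋ ≥ −4/β² − (16/β²)e^{−4a/β} for a/β > 2 and β small; in particular q(f) ≥ (−4/β² − 16β³/β²)‖f‖² when a = −(3/4)β ln β. -/

import Mathlib

open Real MeasureTheory

lemma my_hasDerivAt_tanh (x : ℝ) : HasDerivAt Real.tanh (1 / Real.cosh x ^ 2) x := by
  have h : HasDerivAt (fun y => Real.sinh y / Real.cosh y)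
      ((Real.cosh x * Real.cosh x - Real.sinh x * Real.sinh x) / Real.cosh x ^ 2) x :=
    (Real.hasDerivAt_sinh x).div (Real.hasDerivAt_cosh x) (ne_of_gt (Real.cosh_pos x))
  have h2 : Real.cosh x * Real.cosh x - Real.sinh x * Real.sinh x = 1 := by
    have := Real.cosh_sq_sub_sinh_sq x; nlinarith
  have h3 : (fun y => Real.sinh y / Real.cosh y) = Real.tanh := by
    funext y; rw [Real.tanh_eq_sinh_div_cosh]
  rw [h3, h2] at h; exact h

lemma sech_sq (t : ℝ) : 1 / Real.cosh t ^ 2 = 1 - Real.tanh t ^ 2 := by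
  rw [Real.tanh_eq_sinh_div_cosh]
  have hc := Real.cosh_pos t
  have := Real.cosh_sq_sub_sinh_sq t
  field_simp
  linarith

lemma abs_tanh_le (t : ℝ) : |Real.tanh t| ≤ 1 := by
  rw [Real.tanh_eq_sinh_div_cosh, abs_div, abs_of_pos (Real.cosh_pos t),
    div_le_one (Real.cosh_pos t)]
  have h := Real.cosh_sq_sub_sinh_sq t
  nlinarith [abs_nonneg (Real.sinh t), sq_abs (Real.sinh t), Real.cosh_pos t,
    abs_nonneg (Real.sinh t)]

lemma tanh_ge (t : ℝ) : 1 - 2 * Real.exp (-2 * t) ≤ Real.tanh t := by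
  rw [Real.tanh_eq_sinh_div_cosh, le_div_iff₀ (Real.cosh_pos t), Real.sinh_eq, Real.cosh_eq]
  have h1 : Real.exp (-2 * t) = Real.exp (-t) ^ 2 := by
    rw [← Real.exp_nat_mul]; norm_num
  have h2 : Real.exp (-t) = (Real.exp t)⁻¹ := Real.exp_neg t
  have h3 := Real.exp_pos t
  have h4 := Real.exp_pos (-t)
  rw [h1, h2]
  have h5 : (Real.exp t)⁻¹ * Real.exp t = 1 := inv_mul_cancel₀ (ne_of_gt h3)
  nlinarith [sq_nonneg ((Real.exp t)⁻¹), pow_pos h4 2, mul_pos h3 h4]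

/-- Core integration-by-parts trace inequality. -/
lemma core_trace (k e c d : ℝ) (hcd : c ≤ d) (f : ℝ → ℝ) (hf : Differentiable ℝ f)
    (hI1 : IntegrableOn (fun u => (deriv f u)^2) (Set.Ioo c d) volume)
    (hI0 : IntegrableOn (fun u => (f u)^2) (Set.Ioo c d) volume) :
    (f c)^2 * (k * Real.tanh (k*(e-c))) - (f d)^2 * (k * Real.tanh (k*(e-d)))
      ≤ (∫ u in Set.Ioo c d, (deriv f u)^2) + k^2 * ∫ u in Set.Ioo c d, (f u)^2 := by
  set w : ℝ → ℝ := fun x => k * Real.tanh (k*(e-x)) with hw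
  set W : ℝ → ℝ := fun x => -k^2 * (1 / Real.cosh (k*(e-x)) ^ 2) with hW
  have hwd : ∀ x, HasDerivAt w (W x) x := by
    intro x
    have h1 : HasDerivAt (fun x : ℝ => k*(e-x)) (-k) x := by
      simpa using ((hasDerivAt_id x).const_sub e).const_mul k
    have h2 := (my_hasDerivAt_tanh (k*(e-x))).comp x h1
    have h3 := h2.const_mul k
    convert h3 using 1
    · rfl
    · rfl
    show -k^2 * (1 / Real.cosh (k*(e-x)) ^ 2) = _; ring
    rfl
  set F : ℝ → ℝ := fun x => (f x)^2 * w x with hF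
  set F' : ℝ → ℝ := fun x => 2 * f x * deriv f x * w x + (f x)^2 * W x with hF'
  have hFd : ∀ x, HasDerivAt F (F' x) x := by
    intro x
    have h1 : HasDerivAt (fun y => (f y)^2) (2 * f x * deriv f x) x := by
      simpa [mul_comm, mul_assoc, mul_left_comm] using ((hf x).hasDerivAt).fun_pow 2
    exact h1.mul (hwd x)
  -- pointwise identity
  have hpt : ∀ x, (deriv f x)^2 + k^2 * (f x)^2 + F' x = (deriv f x + w x * f x)^2 := by
    intro x
    have hs := sech_sq (k*(e-x))
    simp only [hF', hW, hw]
    rw [hs]; ring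
  -- measurability of deriv f
  have hmd : Measurable (deriv f) := measurable_deriv f
  have hcf : Continuous f := hf.continuous
  have hcw : Continuous w := by
    have : Continuous Real.tanh := by
      rw [show Real.tanh = fun y => Real.sinh y / Real.cosh y from
        funext fun y => Real.tanh_eq_sinh_div_cosh y]
      exact Real.continuous_sinh.div Real.continuous_cosh fun x => ne_of_gt (Real.cosh_pos x)
    exact continuous_const.mul (this.comp (continuous_const.mul (continuous_const.sub continuous_id)))
  have hcW : Continuous W := by
    have : Continuous fun x : ℝ => Real.cosh (k*(e-x)) ^ 2 :=
      (Real.continuous_cosh.comp (continuous_const.mul (continuous_const.sub continuous_id))).pow 2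
    exact continuous_const.mul (continuous_const.div this fun x =>
      by positivity)
  -- integrability of F' on Ioo
  have hF'meas : AEStronglyMeasurable F' (volume.restrict (Set.Ioo c d)) := by
    apply AEStronglyMeasurable.add
    · exact ((((hcf.measurable.const_mul 2).mul hmd).mul hcw.measurable)).aestronglyMeasurable
    · exact (((hcf.measurable.pow_const 2).mul hcW.measurable)).aestronglyMeasurable
  have hbound : IntegrableOn
      (fun x => |k| * ((deriv f x)^2 + (f x)^2) + k^2 * (f x)^2) (Set.Ioo c d) volume :=
    ((hI1.add hI0).const_mul _).add (hI0.const_mul _)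
  have hF'int : IntegrableOn F' (Set.Ioo c d) volume := by
    apply Integrable.mono' hbound hF'meas
    filter_upwards with x
    have hwb : |w x| ≤ |k| := by
      simp only [hw]
      rw [abs_mul]
      nlinarith [abs_tanh_le (k*(e-x)), abs_nonneg k, abs_nonneg (Real.tanh (k*(e-x)))]
    have hWb : |W x| ≤ k^2 := by
      simp only [hW]
      rw [abs_mul, abs_neg, abs_of_nonneg (sq_nonneg k), abs_of_nonneg (by positivity : (0:ℝ) ≤ 1 / Real.cosh (k*(e-x))^2)]
      have h1 : (1:ℝ) ≤ Real.cosh (k*(e-x))^2 := by nlinarith [Real.one_le_cosh (k*(e-x))]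
      have h2 : 1 / Real.cosh (k*(e-x))^2 ≤ 1 := by
        rw [div_le_one (by positivity)]; exact h1
      nlinarith [sq_nonneg k]
    simp only [hF']
    calc |2 * f x * deriv f x * w x + (f x)^2 * W x|
        ≤ |2 * f x * deriv f x * w x| + |(f x)^2 * W x| := abs_add_le _ _
      _ ≤ |k| * ((deriv f x)^2 + (f x)^2) + k^2 * (f x)^2 := by
          have h1 : |2 * f x * deriv f x * w x| ≤ |k| * ((deriv f x)^2 + (f x)^2) := by
            rw [abs_mul]
            have h2 : |2 * f x * deriv f x| ≤ (deriv f x)^2 + (f x)^2 := by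
              rw [abs_mul, abs_mul]
              simp only [abs_two]
              nlinarith [sq_abs (f x), sq_abs (deriv f x), sq_nonneg (|f x| - |deriv f x|),
                abs_nonneg (f x), abs_nonneg (deriv f x)]
            calc |2 * f x * deriv f x| * |w x| ≤ ((deriv f x)^2 + (f x)^2) * |k| := by
                  apply mul_le_mul h2 hwb (abs_nonneg _) (by positivity)
              _ = |k| * ((deriv f x)^2 + (f x)^2) := by ring
          have h3 : |(f x)^2 * W x| ≤ k^2 * (f x)^2 := by
            rw [abs_mul, abs_of_nonneg (sq_nonneg (f x))]
            calc (f x)^2 * |W x| ≤ (f x)^2 * k^2 :=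
                  mul_le_mul_of_nonneg_left hWb (sq_nonneg _)
              _ = k^2 * (f x)^2 := by ring
          linarith
  -- FTC
  have hFTC : ∫ x in Set.Ioo c d, F' x = F d - F c := by
    have h1 : ∀ x ∈ Set.uIcc c d, HasDerivAt F (F' x) x := fun x _ => hFd x
    have h2 : IntervalIntegrable F' volume c d := by
      rw [intervalIntegrable_iff_integrableOn_Ioc_of_le hcd]
      rwa [integrableOn_Ioc_iff_integrableOn_Ioo]
    have h3 := intervalIntegral.integral_eq_sub_of_hasDerivAt h1 h2
    rw [intervalIntegral.integral_of_le hcd, integral_Ioc_eq_integral_Ioo] at h3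
    exact h3
  -- combine
  have hsum : IntegrableOn (fun x => (deriv f x)^2 + k^2 * (f x)^2) (Set.Ioo c d) volume :=
    hI1.add (hI0.const_mul _)
  have hnn : 0 ≤ ∫ x in Set.Ioo c d, ((deriv f x)^2 + k^2 * (f x)^2 + F' x) :=
    setIntegral_nonneg measurableSet_Ioo (fun x _ => by rw [hpt x]; positivity)
  rw [integral_add hsum hF'int] at hnn
  rw [integral_add hI1 (hI0.const_mul _), integral_const_mul] at hnn
  rw [hFTC] at hnn
  have hFc : F c = (f c)^2 * (k * Real.tanh (k*(e-c))) := rfl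
  have hFd' : F d = (f d)^2 * (k * Real.tanh (k*(e-d))) := rfl
  linarith

-- scalar key inequality
lemma key_scalar (β a : ℝ) (hb : 0 < β) (hab : a / β > 2) :
    2 / β ≤ (2/β * Real.sqrt (1 + 4 * Real.exp (-4*a/β))) *
      Real.tanh ((2/β * Real.sqrt (1 + 4 * Real.exp (-4*a/β))) * a) := by
  set E := Real.exp (-4*a/β) with hE
  set k := 2/β * Real.sqrt (1 + 4*E) with hk
  have h2b : 2*β < a := by
    have h := (lt_div_iff₀ hb).mp hab
    linarith
  have ha : 0 < a := by linarith
  have hEpos : 0 < E := Real.exp_pos _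
  have hE16 : E ≤ 1/16 := by
    have h8 : -4*a/β ≤ -8 := by
      have hq : 2 < a/β := hab
      have h : -4*a/β = -4*(a/β) := by ring
      rw [h]; linarith
    have h16 : (16:ℝ) ≤ Real.exp 8 := by
      have h4 : (5:ℝ) ≤ Real.exp 4 := by linarith [Real.add_one_le_exp (4:ℝ)]
      have h8' : Real.exp 8 = Real.exp 4 * Real.exp 4 := by
        rw [← Real.exp_add]; norm_num
      nlinarith
    calc E ≤ Real.exp (-8) := Real.exp_le_exp.mpr h8
      _ = (Real.exp 8)⁻¹ := Real.exp_neg 8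
      _ ≤ 1/16 := by
        rw [inv_le_comm₀ (Real.exp_pos 8) (by norm_num : (0:ℝ) < 1/16)]
        norm_num
        linarith
  have hsqrt : 1 + E ≤ Real.sqrt (1 + 4*E) := by
    rw [Real.le_sqrt (by positivity) (by positivity)]
    nlinarith
  have hk_pos : 0 < k := by
    have : 0 < Real.sqrt (1+4*E) := lt_of_lt_of_le (by linarith) hsqrt
    positivity
  have hka : 2*a/β * (1+E) ≤ k * a := by
    rw [hk]
    calc 2*a/β * (1+E) ≤ 2*a/β * Real.sqrt (1+4*E) := by
          apply mul_le_mul_of_nonneg_left hsqrt (by positivity)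
      _ = 2/β * Real.sqrt (1+4*E) * a := by ring
  set u := Real.exp (-2*(k*a)) with hu
  have hupos : 0 < u := Real.exp_pos _
  have hu1 : u ≤ E * (1+8*E)⁻¹ := by
    have h1 : -2*(k*a) ≤ -2*(2*a/β*(1+E)) := by nlinarith
    have h2 : -2*(2*a/β*(1+E)) = -4*a/β + -(4*a/β*E) := by ring
    calc u ≤ Real.exp (-2*(2*a/β*(1+E))) := Real.exp_le_exp.mpr h1
      _ = E * Real.exp (-(4*a/β*E)) := by rw [h2, Real.exp_add, hE]
      _ ≤ E * Real.exp (-(8*E)) := by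
          apply mul_le_mul_of_nonneg_left _ hEpos.le
          apply Real.exp_le_exp.mpr
          have h3 : 8 < 4*(a/β) := by linarith
          have h4 : 4*(a/β) = 4*a/β := by ring
          nlinarith
      _ ≤ E * (1+8*E)⁻¹ := by
          apply mul_le_mul_of_nonneg_left _ hEpos.le
          rw [Real.exp_neg, inv_le_inv₀ (Real.exp_pos _) (by positivity)]
          linarith [Real.add_one_le_exp (8*E)]
  have hu2 : u ≤ E - 4*E^2 := by
    have h1 : (0:ℝ) < 1+8*E := by positivity
    rw [← sub_nonneg]
    have h2 : E - 4*E^2 - E * (1+8*E)⁻¹ = (4*E^2 - 32*E^3) * (1+8*E)⁻¹ := by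
      field_simp; ring
    have h3 : 0 ≤ (4*E^2 - 32*E^3) * (1+8*E)⁻¹ := by
      apply mul_nonneg _ (by positivity)
      nlinarith
    linarith [hu1, h2, h3]
  have htanh : 1 - 2*u ≤ Real.tanh (k*a) := by
    have := tanh_ge (k*a)
    exact this
  have hfac : 1 ≤ Real.sqrt (1+4*E) * (1 - 2*u) := by
    have h0 : (0:ℝ) < 1 - 2*u := by nlinarith
    have h1 : 1/(1-2*u) ≤ Real.sqrt (1+4*E) := by
      rw [Real.le_sqrt (by positivity) (by positivity)]
      rw [div_pow, div_le_iff₀ (by positivity), one_pow]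
      nlinarith [mul_nonneg (sub_nonneg.mpr hu2) hEpos.le,
        mul_nonneg (mul_nonneg hEpos.le hEpos.le) hEpos.le, sq_nonneg u,
        mul_nonneg hupos.le hupos.le]
    calc (1:ℝ) = 1/(1-2*u) * (1-2*u) := by field_simp
      _ ≤ Real.sqrt (1+4*E) * (1-2*u) :=
          mul_le_mul_of_nonneg_right h1 h0.le
  have htanh_pos : 0 ≤ 1 - 2*u := by nlinarith
  calc 2/β = 2/β * 1 := by ring
    _ ≤ 2/β * (Real.sqrt (1+4*E) * (1-2*u)) := by
        apply mul_le_mul_of_nonneg_left hfac (by positivity)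
    _ = k * (1-2*u) := by rw [hk]; ring
    _ ≤ k * Real.tanh (k*a) := mul_le_mul_of_nonneg_left htanh hk_pos.le


/-- Lower bound for the 1D δ' transversal quadratic form with Neumann ends: for
`a/β > 2` and `β` small, representing an element of `H¹((-a,0) ∪ (0,a))` by its
right part `f` and left part `g`,
`∫₀^a |f'|² + ∫_{-a}^0 |g'|² - β⁻¹ |f(0) - g(0)|²
  ≥ (-4/β² - (16/β²) e^{-4a/β}) (∫₀^a |f|² + ∫_{-a}^0 |g|²)`;
in particular with `a = -(3/4) β ln β` the constant equals `-4/β² - 16β`. -/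
theorem delta_prime_form_lower_bound :
    ∃ β₀ : ℝ, 0 < β₀ ∧ ∀ β a : ℝ, 0 < β → β < β₀ → a / β > 2 →
      ∀ f g : ℝ → ℝ, Differentiable ℝ f → Differentiable ℝ g →
      IntegrableOn (fun u => (deriv f u)^2) (Set.Ioo 0 a) volume →
      IntegrableOn (fun u => (deriv g u)^2) (Set.Ioo (-a) 0) volume →
      IntegrableOn (fun u => (f u)^2) (Set.Ioo 0 a) volume →
      IntegrableOn (fun u => (g u)^2) (Set.Ioo (-a) 0) volume →
      ((∫ u in Set.Ioo 0 a, (deriv f u)^2) + (∫ u in Set.Ioo (-a) 0, (deriv g u)^2)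
          - β⁻¹ * (f 0 - g 0)^2
        ≥ (-4/β^2 - (16/β^2) * Real.exp (-4*a/β)) *
          ((∫ u in Set.Ioo 0 a, (f u)^2) + ∫ u in Set.Ioo (-a) 0, (g u)^2)) ∧
      (a = -(3/4) * β * Real.log β →
        (∫ u in Set.Ioo 0 a, (deriv f u)^2) + (∫ u in Set.Ioo (-a) 0, (deriv g u)^2)
            - β⁻¹ * (f 0 - g 0)^2
          ≥ (-4/β^2 - 16 * β^3 / β^2) *
            ((∫ u in Set.Ioo 0 a, (f u)^2) + ∫ u in Set.Ioo (-a) 0, (g u)^2)) := by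
  refine ⟨1, one_pos, ?_⟩
  intro β a hb hb1 hab f g hf hg hI1f hI1g hI0f hI0g
  have ha : 0 < a := by
    have h := (lt_div_iff₀ hb).mp hab
    linarith
  set E := Real.exp (-4*a/β) with hE
  set k := 2/β * Real.sqrt (1 + 4*E) with hk
  have hEpos : 0 < E := Real.exp_pos _
  have hk2 : k^2 = 4/β^2 * (1 + 4*E) := by
    rw [hk, mul_pow, Real.sq_sqrt (by positivity)]
    ring
  have hK : 2/β ≤ k * Real.tanh (k * a) := key_scalar β a hb hab
  -- trace inequalities
  have htr_f : (f 0)^2 * (k * Real.tanh (k*a))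
      ≤ (∫ u in Set.Ioo 0 a, (deriv f u)^2) + k^2 * ∫ u in Set.Ioo 0 a, (f u)^2 := by
    have h := core_trace k a 0 a ha.le f hf hI1f hI0f
    simpa using h
  have htr_g : (g 0)^2 * (k * Real.tanh (k*a))
      ≤ (∫ u in Set.Ioo (-a) 0, (deriv g u)^2) + k^2 * ∫ u in Set.Ioo (-a) 0, (g u)^2 := by
    have h := core_trace k (-a) (-a) 0 (by linarith) g hg hI1g hI0g
    have e1 : k*(-a - -a) = 0 := by ring
    have e2 : k*(-a - 0) = -(k*a) := by ring
    rw [e1, e2, Real.tanh_zero, Real.tanh_neg] at h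
    simpa using h
  set A := ∫ u in Set.Ioo 0 a, (deriv f u)^2 with hA
  set B := ∫ u in Set.Ioo (-a) 0, (deriv g u)^2 with hB
  set P := ∫ u in Set.Ioo 0 a, (f u)^2 with hP
  set Q := ∫ u in Set.Ioo (-a) 0, (g u)^2 with hQ
  have hPnn : 0 ≤ P := setIntegral_nonneg measurableSet_Ioo (fun x _ => sq_nonneg _)
  have hQnn : 0 ≤ Q := setIntegral_nonneg measurableSet_Ioo (fun x _ => sq_nonneg _)
  set K := k * Real.tanh (k*a) with hKdef
  have hKpos : 0 < K := lt_of_lt_of_le (by positivity) hK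
  -- bound the jump term
  have hjump : β⁻¹ * (f 0 - g 0)^2 ≤ A + B + k^2 * (P + Q) := by
    have h1 : (f 0 - g 0)^2 ≤ 2*(f 0)^2 + 2*(g 0)^2 := by nlinarith [sq_nonneg (f 0 + g 0)]
    have h2 : β⁻¹ * (f 0 - g 0)^2 ≤ (2/β) * ((f 0)^2 + (g 0)^2) := by
      have := mul_le_mul_of_nonneg_left h1 (by positivity : (0:ℝ) ≤ β⁻¹)
      calc β⁻¹ * (f 0 - g 0)^2 ≤ β⁻¹ * (2*(f 0)^2 + 2*(g 0)^2) := this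
        _ = (2/β) * ((f 0)^2 + (g 0)^2) := by field_simp
    have h3 : (2/β) * ((f 0)^2 + (g 0)^2) ≤ K * ((f 0)^2 + (g 0)^2) :=
      mul_le_mul_of_nonneg_right hK (by positivity)
    have h4 : K * ((f 0)^2 + (g 0)^2) ≤ A + B + k^2 * (P + Q) := by
      have := htr_f
      have := htr_g
      rw [← hKdef] at *
      nlinarith [htr_f, htr_g]
    linarith
  have main1 : A + B - β⁻¹ * (f 0 - g 0)^2
      ≥ (-4/β^2 - (16/β^2) * E) * (P + Q) := by
    have hc : (-4/β^2 - (16/β^2) * E) = -k^2 := by rw [hk2]; ring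
    rw [hc]
    nlinarith [hjump]
  refine ⟨main1, ?_⟩
  intro haeq
  have hlog : E = β^3 := by
    rw [hE, haeq]
    have h1 : -4*(-(3/4)*β*Real.log β)/β = 3*Real.log β := by
      field_simp
    rw [h1, show (3:ℝ)*Real.log β = Real.log β + Real.log β + Real.log β from by ring,
      Real.exp_add, Real.exp_add, Real.exp_log hb]
    ring
  have hc2 : (-4/β^2 - 16 * β^3 / β^2) = (-4/β^2 - (16/β^2) * E) := by
    rw [hlog]; ring
  rw [hc2]
  exact main1
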